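/- For all n, k ≥ 1, the higher-order tangent numbers are linear combinations of tangent numbers: T(n,k) = (1/(k! · (k−1)!)) · Σ_{r=0}^{k−1} T_{n+r} · T*(k, r+1), where T_m are the tangent numbers and T*(n,k) the higher-order arctangent numbers. -/

import Mathlib

open Real Finset

/-- Tangent numbers: tan t = Σ Tₙ tⁿ/n!. -/
noncomputable def tangentNumber (n : ℕ) : ℝ := iteratedDeriv n Real.tan 0

/-- Secant numbers: sec t = Σ Sₙ tⁿ/n!. -/
noncomputable def secantNumber (n : ℕ) : ℝ := iteratedDeriv n (fun t : ℝ => 1 / Real.cos t) 0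

/-- Higher-order tangent numbers: tanᵏ t / k! = Σ T(n,k) tⁿ/n!. -/
noncomputable def T (n k : ℕ) : ℝ :=
  iteratedDeriv n (fun t : ℝ => Real.tan t ^ k) 0 / (Nat.factorial k : ℝ)

/-- Higher-order secant numbers: sec t · tanᵏ t / k! = Σ S(n,k) tⁿ/n!. -/
noncomputable def S (n k : ℕ) : ℝ :=
  iteratedDeriv n (fun t : ℝ => Real.tan t ^ k / Real.cos t) 0 / (Nat.factorial k : ℝ)

/-- Higher-order arctangent numbers: arctanᵏ t / k! = Σ T*(n,k) tⁿ/n!. -/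
noncomputable def Tstar (n k : ℕ) : ℝ :=
  iteratedDeriv n (fun t : ℝ => Real.arctan t ^ k) 0 / (Nat.factorial k : ℝ)

/-- Binomial coefficient with integer lower index (0 if lower index is negative). -/
noncomputable def chooseZ (a : ℕ) (b : ℤ) : ℝ :=
  if 0 ≤ b then (a.choose b.toNat : ℝ) else 0

/-! ### Auxiliary material for the proof -/

open Polynomial

section PolySide

/-- The operator `p ↦ (1+X²) p'`, implementing `d/dt` through `x = tan t`. -/
noncomputable def Dop (p : Polynomial ℝ) : Polynomial ℝ := (1 + Polynomial.X ^ 2) * p.derivative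

lemma Dop_zero : Dop 0 = 0 := by simp [Dop]
lemma Dop_add (p q : Polynomial ℝ) : Dop (p + q) = Dop p + Dop q := by simp [Dop, mul_add]
lemma Dop_C_mul (a : ℝ) (p : Polynomial ℝ) : Dop (C a * p) = C a * Dop p := by simp [Dop]; ring
lemma Dop_C (a : ℝ) : Dop (C a) = 0 := by simp [Dop]

lemma Dop_sum {s : Finset ℕ} (f : ℕ → Polynomial ℝ) :
    Dop (∑ r ∈ s, f r) = ∑ r ∈ s, Dop (f r) := by
  classical
  induction s using Finset.cons_induction with
  | empty => simp [Dop_zero]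
  | cons a s ha ih => rw [Finset.sum_cons, Finset.sum_cons, Dop_add, ih]

lemma Dop_iter_add (n : ℕ) (p q : Polynomial ℝ) :
    Dop^[n] (p + q) = Dop^[n] p + Dop^[n] q := by
  induction n generalizing p q with
  | zero => simp
  | succ n ih => simp [Function.iterate_succ_apply, Dop_add, ih]

lemma Dop_iter_C_mul (n : ℕ) (a : ℝ) (p : Polynomial ℝ) :
    Dop^[n] (C a * p) = C a * Dop^[n] p := by
  induction n generalizing p with
  | zero => simp
  | succ n ih => simp [Function.iterate_succ_apply, Dop_C_mul, ih]

lemma Dop_iter_sum (n : ℕ) {s : Finset ℕ} (f : ℕ → Polynomial ℝ) :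
    Dop^[n] (∑ r ∈ s, f r) = ∑ r ∈ s, Dop^[n] (f r) := by
  induction n generalizing f with
  | zero => simp
  | succ n ih => simp [Function.iterate_succ_apply, Dop_sum, ih]

lemma Dop_iter_C (n : ℕ) (hn : 1 ≤ n) (a : ℝ) : Dop^[n] (C a) = 0 := by
  obtain ⟨m, rfl⟩ := Nat.exists_eq_add_of_le hn
  rw [add_comm, Function.iterate_succ_apply, Dop_C]
  exact Function.iterate_fixed Dop_zero m

/-- Coefficients expressing `X^k` in the basis `Dop^[r] X` plus a constant. -/
noncomputable def cc : ℕ → ℕ → ℝ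
  | 0, _ => 0
  | 1, r => if r = 0 then 1 else 0
  | (k+2), r => (if 1 ≤ r then cc (k+1) (r-1) / (k+1) else 0) - cc k r

/-- The constant terms. -/
noncomputable def gg : ℕ → ℝ
  | 0 => 1
  | 1 => 0
  | (k+2) => - gg k

lemma cc_eq_zero : ∀ k r, k ≤ r → cc k r = 0 := by
  intro k
  induction k using Nat.strong_induction_on with
  | _ k ih =>
    match k with
    | 0 => intro r _; rfl
    | 1 =>
      intro r hr
      have : r ≠ 0 := by omega
      simp [cc, this]
    | (k+2) =>
      intro r hr
      have h1 : cc (k+1) (r-1) = 0 := ih (k+1) (by omega) (r-1) (by omega)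
      have h2 : cc k r = 0 := ih k (by omega) r (by omega)
      simp [cc, h1, h2]

set_option linter.unreachableTactic false in
set_option linter.unusedTactic false in
lemma key_poly_pair : ∀ k : ℕ,
    ((Polynomial.X : ℝ[X]) ^ k = ∑ r ∈ Finset.range k, C (cc k r) * Dop^[r] X + C (gg k)) ∧
    ((Polynomial.X : ℝ[X]) ^ (k+1)
      = ∑ r ∈ Finset.range (k+1), C (cc (k+1) r) * Dop^[r] X + C (gg (k+1))) := by
  intro k
  induction k with
  | zero =>
    constructor
    · simp [gg]
    · simp [cc, gg]
  | succ k ih =>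
    obtain ⟨hk, hk1⟩ := ih
    refine ⟨hk1, ?_⟩
    have hne : ((k : ℝ) + 1) ≠ 0 := by positivity
    have hD : Dop ((Polynomial.X : ℝ[X]) ^ (k+1))
        = C ((k : ℝ) + 1) * ((Polynomial.X : ℝ[X]) ^ k + X ^ (k+2)) := by
      simp only [Dop, derivative_X_pow]
      push_cast
      ring
    have hDrhs : Dop (∑ r ∈ Finset.range (k+1), C (cc (k+1) r) * Dop^[r] X + C (gg (k+1)))
        = ∑ r ∈ Finset.range (k+1), C (cc (k+1) r) * Dop^[r+1] X := by
      rw [Dop_add, Dop_C, add_zero, Dop_sum]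
      refine Finset.sum_congr rfl fun r _ => ?_
      rw [Dop_C_mul, Function.iterate_succ_apply']
    have key1 : C ((k : ℝ) + 1) * ((Polynomial.X : ℝ[X]) ^ k + X ^ (k+2))
        = ∑ r ∈ Finset.range (k+1), C (cc (k+1) r) * Dop^[r+1] X := by
      rw [← hD, hk1, hDrhs]
    have key2 : (Polynomial.X : ℝ[X]) ^ k + X ^ (k+2)
        = ∑ r ∈ Finset.range (k+1), C (cc (k+1) r / ((k : ℝ) + 1)) * Dop^[r+1] X := by
      have h2 := congrArg (fun p => C (((k : ℝ) + 1)⁻¹) * p) key1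
      rw [← mul_assoc, ← C_mul, inv_mul_cancel₀ hne, C_1, one_mul, Finset.mul_sum] at h2
      rw [h2]
      refine Finset.sum_congr rfl fun r _ => ?_
      rw [← mul_assoc, ← C_mul, div_eq_mul_inv, mul_comm (cc (k+1) r)]
    have hsum1 : ∑ r ∈ Finset.range (k+2),
        C (if 1 ≤ r then cc (k+1) (r-1) / ((k:ℝ)+1) else 0) * Dop^[r] X
        = ∑ r ∈ Finset.range (k+1), C (cc (k+1) r / ((k : ℝ) + 1)) * Dop^[r+1] X := by
      rw [Finset.sum_range_succ' (fun r => C (if 1 ≤ r then cc (k+1) (r-1) / ((k:ℝ)+1) else 0)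
        * Dop^[r] X) (k+1)]
      simp
    have hsum2 : ∑ r ∈ Finset.range (k+2), C (cc k r) * Dop^[r] X
        = (Polynomial.X : ℝ[X]) ^ k - C (gg k) := by
      rw [Finset.sum_range_succ, Finset.sum_range_succ, cc_eq_zero k k le_rfl,
        cc_eq_zero k (k+1) (by omega)]
      simp only [map_zero, zero_mul, add_zero]
      rw [hk]; ring
    have hccC : ∀ r, C (cc (k+2) r)
        = C (if 1 ≤ r then cc (k+1) (r-1) / ((k:ℝ)+1) else 0) - C (cc k r) := by
      intro r
      rw [← C_sub]
      congr 1
      all_goals (simp only [cc]; push_cast)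
    have hggC : gg (k+2) = - gg k := rfl
    calc (Polynomial.X : ℝ[X]) ^ (k+1+1)
        = ((Polynomial.X : ℝ[X]) ^ k + X ^ (k+2)) - ((Polynomial.X : ℝ[X]) ^ k - C (gg k))
            + C (- gg k) := by push_cast; ring_nf; rw [map_neg]; ring
      _ = ∑ r ∈ Finset.range (k+2),
            C (if 1 ≤ r then cc (k+1) (r-1) / ((k:ℝ)+1) else 0) * Dop^[r] X
          - ∑ r ∈ Finset.range (k+2), C (cc k r) * Dop^[r] X + C (gg (k+2)) := by
          rw [hsum1, ← key2, hsum2, hggC, map_neg]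
      _ = ∑ r ∈ Finset.range (k+1+1), C (cc (k+1+1) r) * Dop^[r] X + C (gg (k+1+1)) := by
          rw [← Finset.sum_sub_distrib]
          congr 1
          refine Finset.sum_congr rfl fun r _ => ?_
          rw [show ((k:ℕ)+1+1) = k+2 from rfl, hccC r, sub_mul]

end PolySide

section TanSide

lemma isOpen_cos_ne : IsOpen {s : ℝ | Real.cos s ≠ 0} :=
  isOpen_ne.preimage Real.continuous_cos

lemma iteratedDeriv_eval_tan (q : Polynomial ℝ) (n : ℕ) :
    ∀ t : ℝ, Real.cos t ≠ 0 →
      iteratedDeriv n (fun s => Polynomial.eval (Real.tan s) q) t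
        = Polynomial.eval (Real.tan t) (Dop^[n] q) := by
  induction n with
  | zero => intro t _; simp
  | succ n ih =>
    intro t ht
    have hev : iteratedDeriv n (fun s => Polynomial.eval (Real.tan s) q)
        =ᶠ[nhds t] fun s => Polynomial.eval (Real.tan s) (Dop^[n] q) := by
      filter_upwards [isOpen_cos_ne.mem_nhds ht] with s hs
      exact ih s hs
    rw [iteratedDeriv_succ, hev.deriv_eq]
    have h1 : HasDerivAt (fun s => Polynomial.eval (Real.tan s) (Dop^[n] q))
        (Polynomial.eval (Real.tan t) (Dop^[n] q).derivative * (1 / Real.cos t ^ 2)) t :=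
      HasDerivAt.comp t (Polynomial.hasDerivAt _ (Real.tan t)) (Real.hasDerivAt_tan ht)
    rw [h1.deriv, Function.iterate_succ_apply']
    have htan : (1 : ℝ) / Real.cos t ^ 2 = 1 + Real.tan t ^ 2 := by
      rw [one_div, ← Real.inv_one_add_tan_sq ht, inv_inv]
    rw [htan]
    simp only [Dop, Polynomial.eval_mul, Polynomial.eval_add, Polynomial.eval_one,
      Polynomial.eval_pow, Polynomial.eval_X]
    ring

lemma tangentNumber_eq_eval (m : ℕ) :
    tangentNumber m = Polynomial.eval 0 (Dop^[m] Polynomial.X) := by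
  have h : Real.tan = fun s => Polynomial.eval (Real.tan s) (Polynomial.X : ℝ[X]) := by
    funext s; simp
  rw [tangentNumber, h, iteratedDeriv_eval_tan Polynomial.X m 0 (by simp), Real.tan_zero]

lemma tan_pow_eq_eval (n k : ℕ) :
    iteratedDeriv n (fun t : ℝ => Real.tan t ^ k) 0
      = Polynomial.eval 0 (Dop^[n] (Polynomial.X ^ k)) := by
  have h : (fun t : ℝ => Real.tan t ^ k)
      = fun s => Polynomial.eval (Real.tan s) ((Polynomial.X : ℝ[X]) ^ k) := by
    funext s; simp
  rw [h, iteratedDeriv_eval_tan _ n 0 (by simp), Real.tan_zero]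

lemma tan_side (n k : ℕ) (hn : 1 ≤ n) :
    iteratedDeriv n (fun t : ℝ => Real.tan t ^ k) 0
      = ∑ r ∈ Finset.range k, cc k r * tangentNumber (n+r) := by
  rw [tan_pow_eq_eval n k, (key_poly_pair k).1, Dop_iter_add, Dop_iter_C n hn, add_zero,
    Dop_iter_sum, Polynomial.eval_finset_sum]
  refine Finset.sum_congr rfl fun r _ => ?_
  rw [Dop_iter_C_mul, Polynomial.eval_mul, Polynomial.eval_C,
    ← Function.iterate_add_apply Dop n r Polynomial.X, tangentNumber_eq_eval]

end TanSide

section ArctanSide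

lemma iteratedDeriv_const_mul' (c : ℝ) (f : ℝ → ℝ) :
    ∀ n, iteratedDeriv n (fun x => c * f x) = fun x => c * iteratedDeriv n f x := by
  intro n
  induction n with
  | zero => simp
  | succ n ih =>
    rw [iteratedDeriv_succ, ih, iteratedDeriv_succ]
    funext x
    exact deriv_const_mul_field c

lemma iteratedDeriv_const_fun (c : ℝ) : ∀ n, iteratedDeriv (n+1) (fun _ : ℝ => c) = fun _ => 0 := by
  intro n
  induction n with
  | zero => rw [iteratedDeriv_succ]; funext x; simp
  | succ n ih => rw [iteratedDeriv_succ, ih]; funext x; simp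

lemma diff_iter {f : ℝ → ℝ} (m : ℕ) (hf : ContDiff ℝ (⊤ : ℕ∞) f) :
    Differentiable ℝ (iteratedDeriv m f) :=
  (hf.of_le (by exact_mod_cast le_top :
      ((m+1 : ℕ) : WithTop ℕ∞) ≤ ((⊤ : ℕ∞) : WithTop ℕ∞))).differentiable_iteratedDeriv m
    (by exact_mod_cast m.lt_succ_self)

lemma hasDerivAt_iter {f : ℝ → ℝ} (m : ℕ) (hf : ContDiff ℝ (⊤ : ℕ∞) f) (x : ℝ) :
    HasDerivAt (iteratedDeriv m f) (iteratedDeriv (m+1) f x) x := by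
  have h := (diff_iter m hf x).hasDerivAt
  rwa [show deriv (iteratedDeriv m f) x = iteratedDeriv (m+1) f x by rw [iteratedDeriv_succ]] at h

lemma hasDerivAt_one_add_sq (x : ℝ) : HasDerivAt (fun y : ℝ => 1 + y^2) (2*x) x := by
  simpa using ((hasDerivAt_pow 2 x).const_add 1)

lemma hasDerivAt_shape (A B CC : ℝ → ℝ) (a' b' c' : ℝ) (c d : ℝ) (x : ℝ)
    (hA : HasDerivAt A a' x) (hB : HasDerivAt B b' x) (hCC : HasDerivAt CC c' x) :
    HasDerivAt (fun y => (1 + y^2) * A y + c * y * B y + d * CC y)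
      (2*x*A x + (1+x^2)*a' + c*B x + c*x*b' + d*c') x := by
  have hxc : HasDerivAt (fun y : ℝ => c * y) c x := by
    simpa using (hasDerivAt_id x).const_mul c
  have h1 := (hasDerivAt_one_add_sq x).mul hA
  have h2 := hxc.mul hB
  have h3 := hCC.const_mul d
  have h : HasDerivAt (fun y => (1 + y^2) * A y + c * y * B y + d * CC y) _ x :=
    (h1.add h2).add h3
  convert h using 1
  ring

lemma onex2_one {f : ℝ → ℝ} (hf : ContDiff ℝ (⊤ : ℕ∞) f) :
    iteratedDeriv 1 (fun y => (1 + y^2) * f y)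
      = fun x => (1+x^2) * iteratedDeriv 1 f x + 2*x*f x := by
  rw [iteratedDeriv_one]
  funext x
  have hA : HasDerivAt f (iteratedDeriv 1 f x) x := by
    have h := hasDerivAt_iter 0 hf x; simpa using h
  have h := (hasDerivAt_one_add_sq x).mul hA
  have hd : deriv (fun y => (1 + y^2) * f y) x = _ := h.deriv
  rw [hd]
  ring

lemma onex2_two {f : ℝ → ℝ} (hf : ContDiff ℝ (⊤ : ℕ∞) f) : ∀ n : ℕ,
    iteratedDeriv (n+2) (fun y => (1 + y^2) * f y)
      = fun x => (1+x^2) * iteratedDeriv (n+2) f x + 2*((n:ℝ)+2)*x*iteratedDeriv (n+1) f x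
          + ((n:ℝ)+2)*((n:ℝ)+1)*iteratedDeriv n f x := by
  intro n
  induction n with
  | zero =>
    rw [iteratedDeriv_succ, onex2_one hf]
    funext x
    have h := hasDerivAt_shape (iteratedDeriv 1 f) f f (iteratedDeriv 2 f x)
      (iteratedDeriv 1 f x) (iteratedDeriv 1 f x) 2 0 x
      (hasDerivAt_iter 1 hf x) (by simpa using hasDerivAt_iter 0 hf x)
      (by simpa using hasDerivAt_iter 0 hf x)
    have heq : (fun x => (1+x^2) * iteratedDeriv 1 f x + 2*x*f x)
        = fun y => (1 + y^2) * iteratedDeriv 1 f y + 2 * y * f y + 0 * f y := by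
      funext y; ring
    rw [heq]
    have hd := h.deriv
    simp only [hd]
    push_cast
    simp only [iteratedDeriv_zero]
    ring
  | succ n ih =>
    rw [iteratedDeriv_succ, ih]
    funext x
    have h := hasDerivAt_shape (iteratedDeriv (n+2) f) (iteratedDeriv (n+1) f)
      (iteratedDeriv n f) (iteratedDeriv (n+3) f x) (iteratedDeriv (n+2) f x)
      (iteratedDeriv (n+1) f x) (2*((n:ℝ)+2)) (((n:ℝ)+2)*((n:ℝ)+1)) x
      (hasDerivAt_iter (n+2) hf x) (hasDerivAt_iter (n+1) hf x) (hasDerivAt_iter n hf x)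
    have heq : (fun x => (1+x^2) * iteratedDeriv (n+2) f x
          + 2*((n:ℝ)+2)*x*iteratedDeriv (n+1) f x + ((n:ℝ)+2)*((n:ℝ)+1)*iteratedDeriv n f x)
        = fun y => (1 + y^2) * iteratedDeriv (n+2) f y
          + (2*((n:ℝ)+2)) * y * iteratedDeriv (n+1) f y
          + (((n:ℝ)+2)*((n:ℝ)+1)) * iteratedDeriv n f y := by
      funext y; ring
    rw [heq, h.deriv]
    push_cast
    ring

lemma onex2_at_zero {f : ℝ → ℝ} (hf : ContDiff ℝ (⊤ : ℕ∞) f) (m : ℕ) :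
    iteratedDeriv m (fun y => (1 + y^2) * f y) 0
      = iteratedDeriv m f 0 + ((m*(m-1) : ℕ) : ℝ) * iteratedDeriv (m-2) f 0 := by
  match m with
  | 0 => simp
  | 1 => rw [onex2_one hf]; norm_num
  | (n+2) =>
    rw [onex2_two hf n]
    show (1+(0:ℝ)^2) * iteratedDeriv (n+2) f 0 + 2*((n:ℝ)+2)*0*iteratedDeriv (n+1) f 0
          + ((n:ℝ)+2)*((n:ℝ)+1)*iteratedDeriv n f 0
        = iteratedDeriv (n+2) f 0 + (((n+2)*(n+2-1) : ℕ) : ℝ) * iteratedDeriv (n+2-2) f 0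
    rw [show n+2-2 = n from rfl, show n+2-1 = n+1 from rfl]
    push_cast
    ring

lemma contDiff_arctan_pow (j : ℕ) : ContDiff ℝ (⊤ : ℕ∞) (fun x : ℝ => Real.arctan x ^ j) :=
  Real.contDiff_arctan.pow j

lemma one_add_sq_ne (x : ℝ) : (1 : ℝ) + x^2 ≠ 0 := by positivity

lemma contDiff_inv_one_add_sq : ContDiff ℝ (⊤ : ℕ∞) (fun x : ℝ => 1 / (1 + x^2)) :=
  ContDiff.div contDiff_const (contDiff_const.add (contDiff_id.pow 2)) one_add_sq_ne

lemma deriv_arctan_pow (j : ℕ) :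
    deriv (fun x : ℝ => Real.arctan x ^ j)
      = fun x => (j : ℝ) * (Real.arctan x ^ (j-1) * (1 / (1 + x^2))) := by
  funext x
  have h : deriv (fun x : ℝ => Real.arctan x ^ j) x = _ := ((Real.hasDerivAt_arctan x).pow j).deriv
  rw [h]; ring

lemma arctan_rec (m j : ℕ) :
    iteratedDeriv (m+2) (fun x : ℝ => Real.arctan x ^ j) 0
      = (j : ℝ) * iteratedDeriv (m+1) (fun x : ℝ => Real.arctan x ^ (j-1)) 0
        - (((m+1)*m : ℕ) : ℝ) * iteratedDeriv m (fun x : ℝ => Real.arctan x ^ j) 0 := by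
  set g := deriv (fun x : ℝ => Real.arctan x ^ j) with hg
  have hg_eq : g = fun x => (j : ℝ) * (Real.arctan x ^ (j-1) * (1 / (1 + x^2))) :=
    deriv_arctan_pow j
  have hg_smooth : ContDiff ℝ (⊤ : ℕ∞) g := by
    rw [hg_eq]
    exact contDiff_const.mul ((contDiff_arctan_pow (j-1)).mul contDiff_inv_one_add_sq)
  have hkey : (fun x : ℝ => (1 + x^2) * g x)
      = fun x => (j : ℝ) * Real.arctan x ^ (j-1) := by
    funext x
    rw [hg_eq]
    field_simp
  have h1 := onex2_at_zero hg_smooth (m+1)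
  rw [hkey, iteratedDeriv_const_mul' ((j : ℝ)) _ (m+1)] at h1
  have e1 : iteratedDeriv (m+1) g = iteratedDeriv (m+2) (fun x : ℝ => Real.arctan x ^ j) :=
    (iteratedDeriv_succ').symm
  rw [e1] at h1
  rcases m with _ | m'
  · simpa using h1.symm
  · have e2 : iteratedDeriv (m'+1+1-2) g
        = iteratedDeriv (m'+1) (fun x : ℝ => Real.arctan x ^ j) := by
      rw [show m'+1+1-2 = m' from rfl]
      exact (iteratedDeriv_succ').symm
    rw [e2] at h1
    simp only [show m'+1+1-1 = m'+1 from rfl] at h1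
    push_cast at h1 ⊢
    linarith [h1]

lemma tstar_rec (m j : ℕ) (hj : 1 ≤ j) :
    Tstar (m+2) j = Tstar (m+1) (j-1) - (((m+1)*m : ℕ) : ℝ) * Tstar m j := by
  have hfac : (j : ℝ) * ((j-1).factorial : ℝ) = (j.factorial : ℝ) := by
    rw [← Nat.mul_factorial_pred (show j ≠ 0 by omega)]
    push_cast
    ring
  unfold Tstar
  rw [arctan_rec m j, sub_div]
  congr 1
  · rw [← hfac]
    exact mul_div_mul_left _ _ (by positivity : ((j:ℝ)) ≠ 0)
  · rw [mul_div_assoc]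

lemma tstar_zero (m : ℕ) : Tstar (m+1) 0 = 0 := by
  unfold Tstar
  have h : (fun t : ℝ => Real.arctan t ^ 0) = fun _ : ℝ => (1:ℝ) := by funext t; simp
  rw [h, iteratedDeriv_const_fun 1 m]
  simp

lemma tstar_one (r : ℕ) : Tstar 1 (r+1) = if r = 0 then 1 else 0 := by
  unfold Tstar
  rw [iteratedDeriv_one, deriv_arctan_pow (r+1)]
  rcases r with _ | r'
  · norm_num
  · simp [Real.arctan_zero, zero_pow (Nat.succ_ne_zero r')]

lemma tstar_eq_cc_pair : ∀ k : ℕ,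
    (∀ r, Tstar (k+1) (r+1) = (k.factorial : ℝ) * cc (k+1) r) ∧
    (∀ r, Tstar (k+2) (r+1) = ((k+1).factorial : ℝ) * cc (k+2) r) := by
  intro k
  induction k with
  | zero =>
    constructor
    · intro r
      rw [tstar_one r]
      simp only [cc, Nat.factorial_zero, Nat.cast_one, one_mul]
    · intro r
      have h := tstar_rec 0 (r+1) (by omega)
      simp only [Nat.add_sub_cancel, mul_zero, Nat.cast_zero, zero_mul, sub_zero,
        Nat.mul_zero] at h
      rw [h]
      have hc : cc 2 r = (if 1 ≤ r then cc 1 (r-1) / ((0:ℕ)+1) else 0) - cc 0 r := by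
        simp only [cc]
      rcases r with _ | r'
      · rw [show Tstar 1 0 = 0 from tstar_zero 0, hc]
        simp [cc]
      · rw [tstar_one r', hc]
        rcases r' with _ | r''
        · simp [cc]
        · have : ¬ (r''+1 = 0) := by omega
          simp [cc, this]
  | succ k ih =>
    obtain ⟨ih1, ih2⟩ := ih
    refine ⟨ih2, ?_⟩
    intro r
    have h0 := tstar_rec (k+1) (r+1) (by omega)
    simp only [Nat.add_sub_cancel] at h0
    have h : Tstar (k+3) (r+1)
        = Tstar (k+2) r - ((((k+2)*(k+1) : ℕ)) : ℝ) * Tstar (k+1) (r+1) := h0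
    have hfac2 : (((k+2).factorial : ℕ) : ℝ) = ((k:ℝ)+2) * ((k:ℝ)+1) * (k.factorial : ℝ) := by
      rw [Nat.factorial_succ, Nat.factorial_succ]
      push_cast
      ring
    have hfac1 : (((k+1).factorial : ℕ) : ℝ) = ((k:ℝ)+1) * (k.factorial : ℝ) := by
      rw [Nat.factorial_succ]
      push_cast
      ring
    have hc : cc (k+3) r = (if 1 ≤ r then cc (k+2) (r-1) / (((k+2:ℕ)):ℝ) else 0) - cc (k+1) r := by
      simp only [cc]
      all_goals (push_cast; try ring_nf)
    show Tstar (k+3) (r+1) = (((k+2).factorial : ℕ) : ℝ) * cc (k+3) r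
    rcases r with _ | r'
    · rw [h, show Tstar (k+2) 0 = 0 from tstar_zero (k+1), ih1 0, hc]
      simp only [Nat.le_zero, show ¬ (1 ≤ 0) by omega, if_false, zero_sub]
      rw [hfac2]
      push_cast
      ring
    · rw [h, ih2 r', ih1 (r'+1), hc]
      simp only [show (1:ℕ) ≤ r'+1 by omega, if_true, Nat.add_sub_cancel]
      rw [hfac2, hfac1]
      push_cast
      have hne : ((k:ℝ)+2) ≠ 0 := by positivity
      field_simp

end ArctanSide

theorem stmt13 (n k : ℕ) (hn : 1 ≤ n) (hk : 1 ≤ k) :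
    T n k = 1 / ((k.factorial : ℝ) * ((k - 1).factorial : ℝ)) *
      ∑ r ∈ Finset.range k, tangentNumber (n + r) * Tstar k (r + 1) := by
  obtain ⟨k', rfl⟩ : ∃ k', k = k'+1 := ⟨k-1, by omega⟩
  unfold T
  rw [tan_side n (k'+1) hn]
  rw [show (k'+1) - 1 = k' from rfl]
  have htstar : ∀ r, Tstar (k'+1) (r+1) = (k'.factorial : ℝ) * cc (k'+1) r :=
    (tstar_eq_cc_pair k').1
  have hne1 : ((k'+1).factorial : ℝ) ≠ 0 := Nat.cast_ne_zero.mpr (Nat.factorial_ne_zero _)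
  have hne2 : (k'.factorial : ℝ) ≠ 0 := Nat.cast_ne_zero.mpr (Nat.factorial_ne_zero _)
  rw [Finset.sum_div, Finset.mul_sum]
  refine Finset.sum_congr rfl fun r _ => ?_
  rw [htstar r]
  field_simp
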